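/- The average size of independent sets of the path P_n equals avi(P_n) = (5-√5)/10 · n + (3-√5)/5 - (n+2)/(√5·((-φ²)^(n+2) - 1)), where φ = (1+√5)/2. -/

import Mathlib

open Finset
open scoped Classical

/-- The finite set of independent vertex sets of `G` (including the empty set). -/
noncomputable def indepSets {V : Type*} [Fintype V] (G : SimpleGraph V) : Finset (Finset V) :=
  univ.filter fun s => ∀ u ∈ s, ∀ v ∈ s, ¬ G.Adj u v

/-- `I(G)`: the number of independent vertex sets of `G`. -/
noncomputable def numIndep {V : Type*} [Fintype V] (G : SimpleGraph V) : ℕ :=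
  (indepSets G).card

/-- `T(G)`: the sum of the sizes of all independent vertex sets of `G`. -/
noncomputable def totIndep {V : Type*} [Fintype V] (G : SimpleGraph V) : ℕ :=
  ∑ s ∈ indepSets G, s.card

/-- `avi(G) = T(G)/I(G)`: the average size of an independent vertex set of `G`. -/
noncomputable def avi {V : Type*} [Fintype V] (G : SimpleGraph V) : ℝ :=
  (totIndep G : ℝ) / (numIndep G : ℝ)

open scoped goldenRatio

noncomputable def IS (n : ℕ) : Finset (Finset ℕ) :=
  (Finset.range n).powerset.filter fun s => ∀ i ∈ s, i + 1 ∉ s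

lemma mem_IS {n : ℕ} {s : Finset ℕ} :
    s ∈ IS n ↔ s ⊆ Finset.range n ∧ ∀ i ∈ s, i + 1 ∉ s := by
  simp [IS]

lemma IS_zero : IS 0 = {∅} := by
  ext s
  simp +contextual [mem_IS, Finset.subset_empty]

lemma IS_one : IS 1 = {∅, {0}} := by
  ext s
  simp [mem_IS, Finset.subset_singleton_iff]
  rintro (rfl | rfl) <;> simp

lemma IS_succ_succ (n : ℕ) :
    IS (n + 2) = IS (n + 1) ∪ (IS n).image (insert (n + 1)) := by
  ext s
  simp only [mem_IS, Finset.mem_union, Finset.mem_image]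
  constructor
  · rintro ⟨hsub, hcond⟩
    by_cases h : n + 1 ∈ s
    · right
      refine ⟨s.erase (n + 1), ⟨⟨?_, ?_⟩, ?_⟩⟩
      · intro x hx
        have hx1 := Finset.mem_of_mem_erase hx
        have hx2 := Finset.ne_of_mem_erase hx
        have := hsub hx1
        simp only [Finset.mem_range] at this ⊢
        rcases Nat.lt_or_ge x n with h' | h'
        · exact h'
        · exfalso
          have hxn : x = n := by omega
          subst hxn
          exact hcond x hx1 h
      · intro i hi
        exact fun hc => hcond i (Finset.mem_of_mem_erase hi) (Finset.mem_of_mem_erase hc)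
      · exact Finset.insert_erase h
    · left
      refine ⟨?_, hcond⟩
      intro x hx
      have := hsub hx
      simp only [Finset.mem_range] at this ⊢
      have : x ≠ n + 1 := fun hc => h (hc ▸ hx)
      omega
  · rintro (⟨hsub, hcond⟩ | ⟨t, ⟨⟨hsub, hcond⟩, rfl⟩⟩)
    · exact ⟨hsub.trans (by intro x; simp only [Finset.mem_range]; omega), hcond⟩
    · constructor
      · intro x hx
        rcases Finset.mem_insert.mp hx with h | h
        · simp [h]
        · have := hsub h; simp only [Finset.mem_range] at this ⊢; omega
      · intro i hi hc
        rcases Finset.mem_insert.mp hi with h | h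
        · subst h
          rcases Finset.mem_insert.mp hc with h' | h'
          · omega
          · have := hsub h'; simp only [Finset.mem_range] at this; omega
        · rcases Finset.mem_insert.mp hc with h' | h'
          · have := hsub h; simp only [Finset.mem_range] at this; omega
          · exact hcond i h h'

lemma not_mem_of_mem_IS {n : ℕ} {s : Finset ℕ} (h : s ∈ IS n) : n ∉ s := by
  intro hc
  have := (mem_IS.mp h).1 hc
  simp at this

lemma disj_IS (n : ℕ) : Disjoint (IS (n + 1)) ((IS n).image (insert (n + 1))) := by
  rw [Finset.disjoint_right]
  rintro s hs hs'
  rcases Finset.mem_image.mp hs with ⟨t, _, rfl⟩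
  exact not_mem_of_mem_IS hs' (Finset.mem_insert_self _ _)

lemma injOn_insert (n : ℕ) : Set.InjOn (insert (n + 1)) (IS n : Set (Finset ℕ)) := by
  intro a ha b hb hab
  have hna : n + 1 ∉ a := by
    intro hc; have := (mem_IS.mp ha).1 hc; simp at this
  have hnb : n + 1 ∉ b := by
    intro hc; have := (mem_IS.mp hb).1 hc; simp at this
  have := congrArg (Finset.erase · (n + 1)) hab
  simpa [Finset.erase_insert hna, Finset.erase_insert hnb] using this

lemma card_IS (n : ℕ) : (IS n).card = Nat.fib (n + 2) := by
  induction n using Nat.twoStepInduction with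
  | zero => simp [IS_zero]
  | one =>
    rw [IS_one]
    decide
  | more n ih2 ih1 =>
    rw [IS_succ_succ, Finset.card_union_of_disjoint (disj_IS n),
      Finset.card_image_of_injOn (injOn_insert n), ih1, ih2]
    have h : Nat.fib (n + 2 + 2) = Nat.fib (n + 2) + Nat.fib (n + 2 + 1) := Nat.fib_add_two
    rw [h, show n + 1 + 2 = n + 2 + 1 from rfl]
    omega

def TT : ℕ → ℕ
  | 0 => 0
  | 1 => 1
  | (n + 2) => TT (n + 1) + TT n + Nat.fib (n + 2)

lemma sum_IS (n : ℕ) : ∑ s ∈ IS n, s.card = TT n := by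
  induction n using Nat.twoStepInduction with
  | zero => simp [IS_zero, TT]
  | one => simp [IS_one, TT]
  | more n ih2 ih1 =>
    rw [IS_succ_succ, Finset.sum_union (disj_IS n),
      Finset.sum_image (fun a ha b hb => injOn_insert n ha hb), ih1]
    have : ∑ s ∈ IS n, (insert (n + 1) s).card = ∑ s ∈ IS n, (s.card + 1) := by
      apply Finset.sum_congr rfl
      intro s hs
      rw [Finset.card_insert_of_notMem]
      intro hc; have := (mem_IS.mp hs).1 hc; simp at this
    rw [this, Finset.sum_add_distrib, ih2, Finset.sum_const, smul_eq_mul, mul_one, card_IS]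
    rw [TT]
    ring


lemma mem_indepSets {V : Type*} [Fintype V] {G : SimpleGraph V} {s : Finset V} :
    s ∈ indepSets G ↔ ∀ u ∈ s, ∀ v ∈ s, ¬ G.Adj u v := by
  simp [indepSets]

lemma hi_fwd {n : ℕ} (s : Finset (Fin n)) (hs : s ∈ indepSets (SimpleGraph.pathGraph n)) :
    s.image Fin.val ∈ IS n := by
  rw [mem_indepSets] at hs
  rw [mem_IS]
  constructor
  · intro x hx
    rcases Finset.mem_image.mp hx with ⟨u, _, rfl⟩
    simpa using u.isLt
  · intro i hi hc
    rcases Finset.mem_image.mp hi with ⟨u, hu, rfl⟩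
    rcases Finset.mem_image.mp hc with ⟨v, hv, hv'⟩
    exact hs u hu v hv (SimpleGraph.pathGraph_adj.mpr (Or.inl hv'.symm))

lemma hj_fwd {n : ℕ} (t : Finset ℕ) (ht : t ∈ IS n) :
    (univ.filter fun i : Fin n => i.val ∈ t) ∈ indepSets (SimpleGraph.pathGraph n) := by
  rw [mem_IS] at ht
  rw [mem_indepSets]
  intro u hu v hv hadj
  simp only [Finset.mem_filter] at hu hv
  rcases SimpleGraph.pathGraph_adj.mp hadj with h | h
  · exact ht.2 u.val hu.2 (h ▸ hv.2)
  · exact ht.2 v.val hv.2 (h ▸ hu.2)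

lemma left_inv {n : ℕ} (s : Finset (Fin n)) :
    (univ.filter fun i : Fin n => i.val ∈ s.image Fin.val) = s := by
  ext i
  simp [Fin.val_inj]

lemma right_inv {n : ℕ} (t : Finset ℕ) (ht : t ∈ IS n) :
    (univ.filter fun i : Fin n => i.val ∈ t).image Fin.val = t := by
  ext m
  simp only [Finset.mem_image, Finset.mem_filter, Finset.mem_univ, true_and]
  constructor
  · rintro ⟨u, hu, rfl⟩; exact hu
  · intro hm
    have hlt : m < n := by simpa using (mem_IS.mp ht).1 hm
    exact ⟨⟨m, hlt⟩, hm, rfl⟩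

lemma card_indep_path (n : ℕ) : (indepSets (SimpleGraph.pathGraph n)).card = (IS n).card :=
  Finset.card_bij' (fun s _ => s.image Fin.val) (fun t _ => univ.filter fun i : Fin n => i.val ∈ t)
    hi_fwd hj_fwd (fun s _ => left_inv s) (fun t ht => right_inv t ht)

lemma sum_indep_path (n : ℕ) :
    ∑ s ∈ indepSets (SimpleGraph.pathGraph n), s.card = ∑ t ∈ IS n, t.card :=
  Finset.sum_bij' (fun s _ => s.image Fin.val) (fun t _ => univ.filter fun i : Fin n => i.val ∈ t)
    hi_fwd hj_fwd (fun s _ => left_inv s) (fun t ht => right_inv t ht)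
    (fun s _ => (Finset.card_image_of_injective s Fin.val_injective).symm)


lemma TT_real (n : ℕ) : (TT n : ℝ) =
    (Nat.fib (n + 2) : ℝ) * ((5 - Real.sqrt 5) / 10 * n + (3 - Real.sqrt 5) / 5)
      - (n + 2) * ψ ^ (n + 2) / 5 := by
  have h5 : Real.sqrt 5 ^ 2 = 5 := Real.sq_sqrt (by norm_num)
  have hs : Real.sqrt 5 ≠ 0 := by positivity
  induction n using Nat.twoStepInduction with
  | zero =>
    simp only [TT, Real.goldenConj]
    push_cast
    norm_num
    ring_nf
  | one =>
    simp only [TT, Real.goldenConj]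
    push_cast
    norm_num [Nat.fib]
    linear_combination (3 * (3 - Real.sqrt 5) / 40) * h5
  | more n ih2 ih1 =>
    have hTT : (TT (n + 2) : ℝ) = TT (n + 1) + TT n + Nat.fib (n + 2) := by
      rw [TT]; push_cast; ring
    rw [hTT, ih1, ih2, Real.coe_fib_eq (n + 2), Real.coe_fib_eq (n + 1 + 2),
      Real.coe_fib_eq (n + 2 + 2)]
    push_cast
    simp only [show n + 1 + 2 = (n + 2) + 1 from rfl, show n + 2 + 2 = (n + 2) + 1 + 1 from rfl,
      pow_succ]
    simp only [Real.goldenRatio, Real.goldenConj]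
    generalize ((1 + Real.sqrt 5) / 2) ^ n = a
    generalize ((1 - Real.sqrt 5) / 2) ^ n = b
    field_simp
    ring_nf
    have p3 : Real.sqrt 5 ^ 3 = 5 * Real.sqrt 5 := by linear_combination Real.sqrt 5 * h5
    have p4 : Real.sqrt 5 ^ 4 = 25 := by linear_combination (Real.sqrt 5 ^ 2 + 5) * h5
    have p5 : Real.sqrt 5 ^ 5 = 25 * Real.sqrt 5 := by
      linear_combination (Real.sqrt 5 ^ 3 + 5 * Real.sqrt 5) * h5
    have p6 : Real.sqrt 5 ^ 6 = 125 := by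
      linear_combination (Real.sqrt 5 ^ 4 + 5 * Real.sqrt 5 ^ 2 + 25) * h5
    have p7 : Real.sqrt 5 ^ 7 = 125 * Real.sqrt 5 := by
      linear_combination (Real.sqrt 5 ^ 5 + 5 * Real.sqrt 5 ^ 3 + 25 * Real.sqrt 5) * h5
    have p8 : Real.sqrt 5 ^ 8 = 625 := by
      linear_combination (Real.sqrt 5 ^ 6 + 5 * Real.sqrt 5 ^ 4 + 25 * Real.sqrt 5 ^ 2 + 125) * h5
    simp only [h5, p3, p4, p5, p6, p7, p8]
    ring

lemma numIndep_path (n : ℕ) : numIndep (SimpleGraph.pathGraph n) = Nat.fib (n + 2) := by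
  rw [numIndep, card_indep_path, card_IS]

lemma totIndep_path (n : ℕ) : totIndep (SimpleGraph.pathGraph n) = TT n := by
  rw [totIndep, sum_indep_path, sum_IS]

theorem avi_pathGraph_formula (n : ℕ) :
    avi (SimpleGraph.pathGraph n) =
      (5 - Real.sqrt 5) / 10 * n + (3 - Real.sqrt 5) / 5 -
        (n + 2) / (Real.sqrt 5 * ((-(((1 + Real.sqrt 5) / 2) ^ 2)) ^ (n + 2) - 1)) := by
  rw [show ((1 + Real.sqrt 5) / 2) = Real.goldenRatio from rfl]
  rw [avi, numIndep_path, totIndep_path, TT_real n]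
  have hs : Real.sqrt 5 ≠ 0 := by positivity
  have h5 : Real.sqrt 5 * Real.sqrt 5 = 5 := Real.mul_self_sqrt (by norm_num)
  have hFpos : 0 < Nat.fib (n + 2) := Nat.fib_pos.mpr (by omega)
  have hF : (Nat.fib (n + 2) : ℝ) ≠ 0 := by positivity
  have hψ : (ψ : ℝ) ≠ 0 := Real.goldenConj_ne_zero
  have hψm : (ψ : ℝ) ^ (n + 2) ≠ 0 := pow_ne_zero _ hψ
  have hkey : (-(Real.goldenRatio ^ 2)) * ψ = Real.goldenRatio := by
    linear_combination (- Real.goldenRatio) * Real.goldenRatio_mul_goldenConj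
  have hpow : (-(Real.goldenRatio ^ 2)) ^ (n + 2) = Real.goldenRatio ^ (n + 2) / ψ ^ (n + 2) := by
    rw [eq_div_iff hψm, ← mul_pow, hkey]
  have hgen : ∀ A B : ℝ, B ≠ 0 →
      Real.sqrt 5 * (A / B - 1) = 5 * ((A - B) / Real.sqrt 5) / B := by
    intro A B hB
    field_simp
    linear_combination (A - B) * h5
  have hD : Real.sqrt 5 * ((-(Real.goldenRatio ^ 2)) ^ (n + 2) - 1)
      = 5 * (Nat.fib (n + 2) : ℝ) / ψ ^ (n + 2) := by
    rw [hpow, Real.coe_fib_eq]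
    exact hgen _ _ hψm
  rw [hD]
  revert hψm hF
  generalize (ψ : ℝ) ^ (n + 2) = B
  generalize (Nat.fib (n + 2) : ℝ) = F
  intro hψm hF
  field_simp
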